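/- For every positive integer n and every α ∈ ℝ with α ≠ 0 and α ≠ −1, the family B̄(α) = {B̄_{i,j}(α) : 1 ≤ i ≤ j ≤ n}, consisting of n(n+1)/2 matrices, is linearly independent over ℝ and spans the space S^n of real symmetric n×n matrices; i.e., B̄(α) is a basis of S^n. -/

import Mathlib

open Matrix Finset

noncomputable section

/-- `e i` is the standard basis vector with a `1` in coordinate `i`. -/
def e {n : ℕ} (i : Fin n) : Fin n → ℝ := Pi.single i 1

/-- The positive semidefinite cone `S^n_+`. -/
def PSDcone (n : ℕ) : Set (Matrix (Fin n) (Fin n) ℝ) :=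
  {X | X.IsSymm ∧ ∀ d : Fin n → ℝ, 0 ≤ d ⬝ᵥ X.mulVec d}

/-- The set of diagonally dominant symmetric matrices `DD_n`. -/
def DD (n : ℕ) : Set (Matrix (Fin n) (Fin n) ℝ) :=
  {A | A.IsSymm ∧ ∀ i, ∑ j ∈ Finset.univ.erase i, |A i j| ≤ A i i}

/-- The set of scaled diagonally dominant symmetric matrices `SDD_n`. -/
def SDD (n : ℕ) : Set (Matrix (Fin n) (Fin n) ℝ) :=
  {A | A.IsSymm ∧ ∃ D : Fin n → ℝ, (∀ i, 0 < D i) ∧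
    Matrix.diagonal D * A * Matrix.diagonal D ∈ DD n}

/-- The conical hull of a set of matrices. -/
def coneHull {n : ℕ} (K : Set (Matrix (Fin n) (Fin n) ℝ)) :
    Set (Matrix (Fin n) (Fin n) ℝ) :=
  {X | ∃ (k : ℕ) (c : Fin k → ℝ) (M : Fin k → Matrix (Fin n) (Fin n) ℝ),
    (∀ i, 0 ≤ c i) ∧ (∀ i, M i ∈ K) ∧ X = ∑ i, c i • M i}

/-- The dual cone within `S^n` w.r.t. the trace inner product. -/
def dualCone {n : ℕ} (K : Set (Matrix (Fin n) (Fin n) ℝ)) :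
    Set (Matrix (Fin n) (Fin n) ℝ) :=
  {A | A.IsSymm ∧ ∀ B ∈ K, 0 ≤ Matrix.trace (Aᵀ * B)}

/-- The SD basis of Type I, as a set. -/
def Bplus (n : ℕ) : Set (Matrix (Fin n) (Fin n) ℝ) :=
  {M | ∃ i j : Fin n, i ≤ j ∧ M = vecMulVec (e i + e j) (e i + e j)}

/-- The SD basis of Type II, as a set. -/
def Bminus (n : ℕ) : Set (Matrix (Fin n) (Fin n) ℝ) :=
  {M | ∃ i : Fin n, M = vecMulVec (e i + e i) (e i + e i)} ∪
    {M | ∃ i j : Fin n, i < j ∧ M = vecMulVec (e i - e j) (e i - e j)}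

/-- The expanded SD basis matrix `B̄_{i,j}(α) = (e_i + α e_j)(e_i + α e_j)ᵀ`. -/
def Bbar {n : ℕ} (α : ℝ) (i j : Fin n) : Matrix (Fin n) (Fin n) ℝ :=
  vecMulVec (e i + α • e j) (e i + α • e j)

/-- The expanded SD basis `B̄(α)`, as a set. -/
def BbarSet (n : ℕ) (α : ℝ) : Set (Matrix (Fin n) (Fin n) ℝ) :=
  {M | ∃ i j : Fin n, i ≤ j ∧ M = Bbar α i j}

/-- The space `S^n` of symmetric matrices as a submodule. -/
def symmSubmodule (n : ℕ) : Submodule ℝ (Matrix (Fin n) (Fin n) ℝ) where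
  carrier := {A | A.IsSymm}
  add_mem' := fun {A B} hA hB => by
    simp only [Set.mem_setOf_eq, Matrix.IsSymm, Matrix.transpose_add] at *
    rw [hA, hB]
  zero_mem' := by simp [Matrix.IsSymm]
  smul_mem' := fun c A hA => by
    simp only [Set.mem_setOf_eq, Matrix.IsSymm, Matrix.transpose_smul] at *
    rw [hA]

/-- Index set for pairs `1 ≤ i ≤ j ≤ n`. -/
abbrev SymIdx (n : ℕ) := {p : Fin n × Fin n // p.1 ≤ p.2}


/-- The expanded SD basis `B̄(α)`, as an indexed family. -/
def BbarFam (n : ℕ) (α : ℝ) : SymIdx n → Matrix (Fin n) (Fin n) ℝ :=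
  fun p => Bbar α p.1.1 p.1.2


lemma Bbar_apply {n : ℕ} (α : ℝ) (i j a b : Fin n) :
    Bbar α i j a b = ((if a = i then (1:ℝ) else 0) + α * (if a = j then 1 else 0)) *
      ((if b = i then (1:ℝ) else 0) + α * (if b = j then 1 else 0)) := by
  simp [Bbar, Matrix.vecMulVec_apply, e, Pi.single_apply]

lemma std_apply {n : ℕ} (i j a b : Fin n) (c : ℝ) :
    Matrix.single i j c a b = if i = a ∧ j = b then c else 0 := rfl

lemma Bbar_offdiag_zero {n : ℕ} (α : ℝ) (k l i j : Fin n) (hkl : k ≤ l) (hij : i < j)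
    (hne : (k, l) ≠ (i, j)) : Bbar α k l i j = 0 := by
  rw [Bbar_apply]
  by_cases hik : i = k
  · by_cases hjl : j = l
    · exact absurd (by rw [hik, hjl]) hne
    · have hjk : j ≠ k := fun h => absurd (hik ▸ h ▸ rfl) hij.ne'
      simp [hjl, hjk]
  · by_cases hil : i = l
    · have hjl : j ≠ l := fun h => absurd (hil ▸ h ▸ rfl) hij.ne'
      have hjk : j ≠ k := fun h => (hjl (le_antisymm (h ▸ hkl) (hil ▸ hij.le))).elim
      simp [hjl, hjk]
    · simp [hik, hil]

lemma std_apply' {n : ℕ} (i j a b : Fin n) (c : ℝ) :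
    Matrix.single i j c a b =
      (if a = i then (1:ℝ) else 0) * (if b = j then (1:ℝ) else 0) * c := by
  rw [std_apply]
  rcases eq_or_ne a i with h | h
  · rcases eq_or_ne b j with h' | h'
    · simp [h, h']
    · simp [h, h', Ne.symm h']
  · simp [h, Ne.symm h]

lemma Bbar_diag_eq {n : ℕ} (α : ℝ) (i : Fin n) :
    Bbar α i i = ((1 + α) * (1 + α)) • Matrix.single i i (1:ℝ) := by
  ext a b
  rw [Matrix.smul_apply, Bbar_apply, std_apply', smul_eq_mul]
  split_ifs <;> ring

lemma Bbar_offdiag_eq {n : ℕ} (α : ℝ) (i j : Fin n) (hij : i ≠ j) :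
    Bbar α i j = Matrix.single i i (1:ℝ) +
      α • (Matrix.single i j (1:ℝ) + Matrix.single j i (1:ℝ)) +
      (α * α) • Matrix.single j j (1:ℝ) := by
  ext a b
  rw [Matrix.add_apply, Matrix.add_apply, Matrix.smul_apply, Matrix.smul_apply,
    Matrix.add_apply, Bbar_apply, std_apply', std_apply', std_apply', std_apply']
  simp only [smul_eq_mul]
  split_ifs <;> first | ring | simp_all

/-- for `α ∉ {0, -1}`, `B̄(α)` consists of `n(n+1)/2` matrices,
is linearly independent and spans `S^n`, i.e. it is a basis of `S^n`. -/
theorem stmt11 (n : ℕ) (hn : 0 < n) (α : ℝ) (h0 : α ≠ 0) (h1 : α ≠ -1) :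
    Fintype.card (SymIdx n) = n * (n + 1) / 2 ∧
    LinearIndependent ℝ (BbarFam n α) ∧
    Submodule.span ℝ (Set.range (BbarFam n α)) = symmSubmodule n := by
  have h1' : (1:ℝ) + α ≠ 0 := fun h => h1 (by linarith)
  refine ⟨?_, ?_, ?_⟩
  · rw [← Fintype.card_congr (Sym2.sortEquiv (α := Fin n)), Sym2.card, Fintype.card_fin,
      Nat.choose_two_right, Nat.add_sub_cancel, Nat.mul_comm]
  · rw [Fintype.linearIndependent_iff]
    intro g hg
    have key : ∀ a b : Fin n, ∑ p : SymIdx n, g p * Bbar α p.1.1 p.1.2 a b = 0 := by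
      intro a b
      have h := congrFun (congrFun hg a) b
      simpa [BbarFam, Matrix.sum_apply] using h
    have hoffd : ∀ p : SymIdx n, p.1.1 < p.1.2 → g p = 0 := by
      intro p hp
      have h := key p.1.1 p.1.2
      rw [Finset.sum_eq_single p] at h
      · rw [Bbar_apply] at h
        simp [hp.ne, hp.ne'] at h
        rcases h with h | h
        · exact h
        · exact absurd h h0
      · intro q _ hq
        rw [Bbar_offdiag_zero α q.1.1 q.1.2 p.1.1 p.1.2 q.2 hp
            (fun hc => hq (Subtype.ext (Prod.ext (congrArg Prod.fst hc) (congrArg Prod.snd hc)))),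
          mul_zero]
      · intro hp'; exact absurd (Finset.mem_univ p) hp'
    intro p
    rcases lt_or_eq_of_le p.2 with hp | hp
    · exact hoffd p hp
    · have h := key p.1.1 p.1.1
      rw [Finset.sum_eq_single p] at h
      · rw [Bbar_apply, ← hp] at h
        simp at h
        rcases h with h | h
        · exact h
        · exact absurd h h1'
      · intro q _ hq
        rcases lt_or_eq_of_le q.2 with hq2 | hq2
        · rw [hoffd q hq2, zero_mul]
        · have hne : p.1.1 ≠ q.1.1 := by
            intro hc
            apply hq
            apply Subtype.ext
            apply Prod.ext <;> simp [← hc, ← hq2, ← hp]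
          rw [Bbar_apply, ← hq2]
          simp [hne]
      · intro hp'; exact absurd (Finset.mem_univ p) hp'
  · set S := Submodule.span ℝ (Set.range (BbarFam n α)) with hS
    have hBmem : ∀ p : SymIdx n, Bbar α p.1.1 p.1.2 ∈ S :=
      fun p => Submodule.subset_span ⟨p, rfl⟩
    have hdiagmem : ∀ i : Fin n, Matrix.single i i (1:ℝ) ∈ S := by
      intro i
      have hrw : Matrix.single i i (1:ℝ) = ((1 + α) * (1 + α))⁻¹ • Bbar α i i := by
        rw [Bbar_diag_eq, smul_smul, inv_mul_cancel₀ (mul_ne_zero h1' h1'), one_smul]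
      rw [hrw]
      exact S.smul_mem _ (hBmem ⟨(i, i), le_refl i⟩)
    have hsymmem : ∀ i j : Fin n, i < j →
        Matrix.single i j (1:ℝ) + Matrix.single j i (1:ℝ) ∈ S := by
      intro i j hij
      have hX : Bbar α i j - Matrix.single i i (1:ℝ) - (α * α) • Matrix.single j j (1:ℝ) =
          α • (Matrix.single i j (1:ℝ) + Matrix.single j i (1:ℝ)) := by
        rw [Bbar_offdiag_eq α i j hij.ne]; abel
      have hrw : Matrix.single i j (1:ℝ) + Matrix.single j i (1:ℝ) =
          α⁻¹ • (Bbar α i j - Matrix.single i i (1:ℝ) -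
            (α * α) • Matrix.single j j (1:ℝ)) := by
        rw [hX, smul_smul, inv_mul_cancel₀ h0, one_smul]
      rw [hrw]
      exact S.smul_mem _ (S.sub_mem (S.sub_mem (hBmem ⟨(i, j), hij.le⟩) (hdiagmem i))
        (S.smul_mem _ (hdiagmem j)))
    apply le_antisymm
    · rw [Submodule.span_le]
      rintro M ⟨p, rfl⟩
      show (BbarFam n α p).IsSymm
      unfold BbarFam Bbar
      ext a b
      simp [Matrix.transpose_apply, Matrix.vecMulVec_apply, mul_comm]
    · intro A hA
      have hAs : ∀ a b : Fin n, A b a = A a b := fun a b => by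
        conv_lhs => rw [← hA]
        rfl
      have hrepr : A = (∑ i : Fin n, A i i • Matrix.single i i (1:ℝ)) +
          ∑ p ∈ Finset.univ.filter (fun p : Fin n × Fin n => p.1 < p.2),
            A p.1 p.2 • (Matrix.single p.1 p.2 (1:ℝ) + Matrix.single p.2 p.1 (1:ℝ)) := by
        ext a b
        rw [Matrix.add_apply, Matrix.sum_apply, Matrix.sum_apply]
        have hd : ∑ i : Fin n, (A i i • Matrix.single i i (1:ℝ)) a b =
            if a = b then A a b else 0 := by
          rcases eq_or_ne a b with hab | hab
          · subst hab
            rw [Finset.sum_eq_single a]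
            · simp [std_apply]
            · intro i _ hi; simp [std_apply, hi]
            · intro h; exact absurd (Finset.mem_univ a) h
          · rw [if_neg hab]
            apply Finset.sum_eq_zero
            intro i _
            rcases eq_or_ne i a with hia | hia
            · simp [std_apply, hia ▸ hab]
            · simp [std_apply, hia]
        rw [hd]
        rcases lt_trichotomy a b with hab | hab | hab
        · rw [if_neg hab.ne]
          rw [Finset.sum_eq_single_of_mem (a, b) (by simp [hab])]
          · simp [std_apply, hab.ne, hab.ne']
          · intro q hq hqne
            simp only [Finset.mem_filter] at hq
            have h1q : ¬(q.1 = a ∧ q.2 = b) := by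
              intro hc; exact hqne (Prod.ext hc.1 hc.2)
            have h2q : ¬(q.2 = a ∧ q.1 = b) := by
              rintro ⟨hc1, hc2⟩
              exact absurd (hc1 ▸ hc2 ▸ hq.2) (lt_asymm hab)
            simp [std_apply, h1q, h2q]
        · subst hab
          rw [if_pos rfl]
          have : ∀ q ∈ Finset.univ.filter (fun p : Fin n × Fin n => p.1 < p.2),
              (A q.1 q.2 • (Matrix.single q.1 q.2 (1:ℝ) + Matrix.single q.2 q.1 (1:ℝ))) a a
                = 0 := by
            intro q hq
            simp only [Finset.mem_filter] at hq
            have h1q : ¬(q.1 = a ∧ q.2 = a) := by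
              rintro ⟨hc1, hc2⟩
              have := hq.2; rw [hc1, hc2] at this; exact lt_irrefl a this
            have h2q : ¬(q.2 = a ∧ q.1 = a) := by
              rintro ⟨hc1, hc2⟩
              have := hq.2; rw [hc1, hc2] at this; exact lt_irrefl a this
            simp [std_apply, h1q, h2q]
          rw [Finset.sum_eq_zero this, add_zero]
        · rw [if_neg hab.ne']
          rw [Finset.sum_eq_single_of_mem (b, a) (by simp [hab])]
          · simp [std_apply, hab.ne, hab.ne', hAs]
          · intro q hq hqne
            simp only [Finset.mem_filter] at hq
            have h1q : ¬(q.1 = a ∧ q.2 = b) := by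
              rintro ⟨hc1, hc2⟩
              exact absurd (hc1 ▸ hc2 ▸ hq.2) (lt_asymm hab)
            have h2q : ¬(q.2 = a ∧ q.1 = b) := by
              intro hc; exact hqne (Prod.ext hc.2 hc.1)
            simp [std_apply, h1q, h2q]
      rw [hrepr]
      exact S.add_mem
        (Submodule.sum_mem S fun i _ => S.smul_mem _ (hdiagmem i))
        (Submodule.sum_mem S fun p hp => S.smul_mem _
          (hsymmem p.1 p.2 (Finset.mem_filter.mp hp).2))
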